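/- Let n ≥ 1 and let (f_0, …, f_n) be a family of continuous real-valued functions on the unit circle S¹ = {(x,y) ∈ ℝ² : x² + y² = 1} that is a T-system of order n on S¹. Then n is even. -/

import Mathlib

/-- A family `f 0, …, f (k-1)` of real-valued functions on `X` is a T-system of
order `n` on the set `S ⊆ X` if every nontrivial linear combination has at most
`n` zeros in `S`. -/
def IsTSystemOn {X : Type*} {k : ℕ} (n : ℕ) (f : Fin k → X → ℝ) (S : Set X) : Prop :=
  ∀ a : Fin k → ℝ, a ≠ 0 → {x ∈ S | ∑ i, a i * f i x = 0}.encard ≤ (n : ℕ∞)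

/-- The unit circle in `ℝ²`. -/
def unitCircle : Set (ℝ × ℝ) := {p : ℝ × ℝ | p.1 ^ 2 + p.2 ^ 2 = 1}

noncomputable def circPt (t : ℝ) : ℝ × ℝ := (Real.cos t, Real.sin t)

lemma circPt_mem (t : ℝ) : circPt t ∈ unitCircle := by
  simp [circPt, unitCircle, Real.cos_sq_add_sin_sq]

lemma circPt_continuous : Continuous circPt :=
  Real.continuous_cos.prodMk Real.continuous_sin

lemma circPt_eq {a b : ℝ} (h : circPt a = circPt b) : ∃ k : ℤ, a - b = 2 * Real.pi * k := by
  have h1 : Real.cos a = Real.cos b := congrArg Prod.fst h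
  have h2 : Real.sin a = Real.sin b := congrArg Prod.snd h
  exact Real.Angle.angle_eq_iff_two_pi_dvd_sub.mp (Real.Angle.cos_sin_inj h1 h2)

lemma circPt_two_pi : circPt (2 * Real.pi) = circPt 0 := by
  simp [circPt]

/-- the order of a continuous T-system on the unit circle is even. -/
theorem even_order_of_periodic_tsystem (n : ℕ) (hn : 1 ≤ n)
    (f : Fin (n + 1) → (ℝ × ℝ) → ℝ)
    (hcont : ∀ i, ContinuousOn (f i) unitCircle)
    (hT : IsTSystemOn n f unitCircle) :
    Even n := by
  by_contra he
  have hodd : Odd n := Nat.odd_iff.mpr (Nat.not_even_iff.mp he)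
  have hpi := Real.pi_pos
  set T : ℝ := 2 * Real.pi / (n + 1) with hTdef
  have hNpos : (0:ℝ) < (n:ℝ) + 1 := by positivity
  have hTpos : 0 < T := by positivity
  -- the moving points
  set p : Fin (n + 1) → ℝ → ℝ × ℝ := fun j θ => circPt (θ + T * (j : ℕ)) with hp
  set M : ℝ → Matrix (Fin (n + 1)) (Fin (n + 1)) ℝ :=
    fun θ => Matrix.of fun i j => f i (p j θ) with hM
  -- the determinant never vanishes
  have hdet : ∀ θ, (M θ).det ≠ 0 := by
    intro θ hd
    obtain ⟨v, hv, hvM⟩ := Matrix.exists_vecMul_eq_zero_iff.mpr hd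
    -- the points are distinct
    have hinj : Function.Injective fun j : Fin (n + 1) => p j θ := by
      intro j j' hjj
      obtain ⟨k, hk⟩ := circPt_eq hjj
      have hk' : ((j : ℕ) : ℝ) - ((j' : ℕ) : ℝ) = k * ((n : ℝ) + 1) := by
        have : T * ((j : ℕ) : ℝ) - T * ((j' : ℕ) : ℝ) = 2 * Real.pi * k := by
          linarith [hk]
        rw [hTdef] at this
        field_simp at this
        nlinarith [this, Real.pi_pos]
      have hkz : ((j : ℕ) : ℤ) - ((j' : ℕ) : ℤ) = k * ((n : ℤ) + 1) := by
        exact_mod_cast hk'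
      have h1 : ((j : ℕ) : ℤ) < (n : ℤ) + 1 := by exact_mod_cast j.isLt
      have h2 : ((j' : ℕ) : ℤ) < (n : ℤ) + 1 := by exact_mod_cast j'.isLt
      have hk0 : k = 0 := by nlinarith [Int.natCast_nonneg (j : ℕ), Int.natCast_nonneg (j' : ℕ)]
      rw [hk0, zero_mul] at hkz
      have : ((j : ℕ) : ℤ) = ((j' : ℕ) : ℤ) := by omega
      exact Fin.ext (by exact_mod_cast this)
    have hsub : Set.range (fun j : Fin (n + 1) => p j θ) ⊆
        {x ∈ unitCircle | ∑ i, v i * f i x = 0} := by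
      rintro x ⟨j, rfl⟩
      refine ⟨circPt_mem _, ?_⟩
      have := congrFun hvM j
      simpa [Matrix.vecMul, dotProduct, hM] using this
    have hcard : (Set.range fun j : Fin (n + 1) => p j θ).encard = ((n + 1 : ℕ) : ℕ∞) := by
      rw [← Set.image_univ, hinj.encard_image _, Set.encard_univ]
      simp
    have hle : ((n + 1 : ℕ) : ℕ∞) ≤ (n : ℕ∞) := by
      calc ((n + 1 : ℕ) : ℕ∞) = (Set.range fun j : Fin (n + 1) => p j θ).encard := hcard.symm
        _ ≤ {x ∈ unitCircle | ∑ i, v i * f i x = 0}.encard := Set.encard_le_encard hsub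
        _ ≤ (n : ℕ∞) := hT v hv
    have : n + 1 ≤ n := by exact_mod_cast hle
    omega
  -- continuity of the determinant
  have hDcont : Continuous fun θ => (M θ).det := by
    refine Continuous.matrix_det (continuous_matrix fun i j => ?_)
    exact (hcont i).comp_continuous
      (circPt_continuous.comp (by continuity)) (fun θ => circPt_mem _)
  -- the shift relation
  have hshift : (M T).det = -(M 0).det := by
    have hMT : M T = (M 0).submatrix id (finRotate (n + 1)) := by
      ext i j
      simp only [hM, Matrix.submatrix_apply, Matrix.of_apply, id_eq]
      congr 1
      simp only [hp, finRotate_succ_apply, zero_add]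
      by_cases hj : (j : ℕ) < n
      · congr 1
        have : ((j + 1 : Fin (n + 1)) : ℕ) = (j : ℕ) + 1 := by
          rw [Fin.val_add_one_of_lt]
          exact Fin.lt_last_iff_ne_last.mpr (by
            intro hl; rw [hl] at hj; simp at hj)
        rw [this]
        push_cast
        ring
      · have hj' : (j : ℕ) = n := by omega
        have hjl : j = Fin.last n := Fin.ext (by simpa using hj')
        have : (j + 1 : Fin (n + 1)) = 0 := by
          rw [hjl]; simp
        rw [this]
        have harg : T + T * ((j : ℕ) : ℝ) = 2 * Real.pi := by
          rw [hj', hTdef]; field_simp; ring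
        rw [harg]
        simpa using circPt_two_pi
    rw [hMT, Matrix.det_permute', sign_finRotate, Nat.add_sub_cancel, Odd.neg_one_pow hodd]
    push_cast
    ring
  -- intermediate value theorem
  have h0 := hdet 0
  rcases lt_or_gt_of_ne h0 with hneg | hpos
  · have hmem : (0:ℝ) ∈ Set.Icc ((M 0).det) ((M T).det) := by
      constructor <;> [linarith; linarith [hshift]]
    obtain ⟨θ, _, hθ⟩ := intermediate_value_Icc hTpos.le hDcont.continuousOn hmem
    exact hdet θ hθ
  · have hmem : (0:ℝ) ∈ Set.Icc ((M T).det) ((M 0).det) := by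
      constructor <;> [linarith [hshift]; linarith]
    obtain ⟨θ, _, hθ⟩ := intermediate_value_Icc' hTpos.le hDcont.continuousOn hmem
    exact hdet θ hθ
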